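/- arXiv:2212.03501 — 7 statements merged into one kernel-verified Lean document; each statement's English description precedes it below -/
import Mathlib

section
/- For a finite hypergraph (E,V) with every edge nonempty, and for sets of colors X and Y with C = X ⊔ Y (disjoint union), the proper colorings of (E,V) by C (maps V → C such that no edge is monochromatic) are in bijection with triples consisting of a subset U ⊆ V, a proper coloring of the restricted hypergraph (E|U, U) by X, and a proper coloring of (E|U^c, U^c) by Y. Here E|U = {e ∈ E : h(e) ⊆ U}. -/
/-- A proper coloring of a hypergraph `h : E → Set V` by a color set `C`:
no edge is monochromatic, i.e. every edge has two vertices with different colors. -/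
def Proper {E V C : Type*} (h : E → Set V) (c : V → C) : Prop :=
  ∀ e : E, ∃ u ∈ h e, ∃ v ∈ h e, c u ≠ c v

/-- Restriction of a hypergraph to a vertex subset `U`: the edges are those
contained in `U`, with their vertex sets viewed inside `U`. -/
def restrictH {E V : Type*} (h : E → Set V) (U : Set V) :
    {e : E // h e ⊆ U} → Set U :=
  fun e => {v : U | (v : V) ∈ h e.1}

section Aux

variable {E V X Y : Type*}

/-- The set of vertices colored by the left summand. -/
def Uof (c : V → X ⊕ Y) : Set V := {v | (c v).isLeft}

def cxOf (c : V → X ⊕ Y) (v : Uof c) : X := (c v).getLeft v.2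

def cyOf (c : V → X ⊕ Y) (v : ↥(Uof c)ᶜ) : Y :=
  (c v).getRight (Sum.not_isLeft.mp v.2)

open Classical in
noncomputable def cOf {U : Set V} (cx : U → X) (cy : ↥(Uᶜ) → Y) : V → X ⊕ Y :=
  fun v => if hv : v ∈ U then Sum.inl (cx ⟨v, hv⟩) else Sum.inr (cy ⟨v, hv⟩)

theorem inl_cxOf (c : V → X ⊕ Y) (v : Uof c) : Sum.inl (cxOf c v) = c v :=
  Sum.inl_getLeft _ _

theorem inr_cyOf (c : V → X ⊕ Y) (v : ↥(Uof c)ᶜ) : Sum.inr (cyOf c v) = c v :=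
  Sum.inr_getRight _ _

theorem cOf_mem {U : Set V} (cx : U → X) (cy : ↥(Uᶜ) → Y) {v : V} (hv : v ∈ U) :
    cOf cx cy v = Sum.inl (cx ⟨v, hv⟩) := by
  simp [cOf, hv]

theorem cOf_not_mem {U : Set V} (cx : U → X) (cy : ↥(Uᶜ) → Y) {v : V} (hv : v ∉ U) :
    cOf cx cy v = Sum.inr (cy ⟨v, hv⟩) := by
  simp [cOf, hv]

theorem Uof_cOf {U : Set V} (cx : U → X) (cy : ↥(Uᶜ) → Y) : Uof (cOf cx cy) = U := by
  ext v
  by_cases hv : v ∈ U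
  · simp [Uof, cOf_mem cx cy hv, hv]
  · simp [Uof, cOf_not_mem cx cy hv, hv]

end Aux

/-- Proper colorings of `(E,V)` by a disjoint union of color sets `X ⊕ Y` are in
bijection with triples: a vertex subset `U`, a proper coloring of `(E|U, U)` by `X`,
and a proper coloring of `(E|Uᶜ, Uᶜ)` by `Y`. -/
theorem colorings_sum_equiv {E V X Y : Type*} [Fintype E] [Fintype V]
    (h : E → Set V) (hne : ∀ e, (h e).Nonempty) :
    Nonempty ({c : V → X ⊕ Y // Proper h c} ≃
      Σ U : Set V, {cx : U → X // Proper (restrictH h U) cx} ×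
        {cy : ↥(Uᶜ) → Y // Proper (restrictH h Uᶜ) cy}) := by
  -- forward map
  have hfx : ∀ (c : {c : V → X ⊕ Y // Proper h c}),
      Proper (restrictH h (Uof c.1)) (cxOf c.1) := by
    rintro ⟨c, hc⟩ ⟨e, he⟩
    obtain ⟨u, hu, v, hv, huv⟩ := hc e
    exact ⟨⟨u, he hu⟩, hu, ⟨v, he hv⟩, hv, fun hxy => huv (by
      rw [← inl_cxOf c ⟨u, he hu⟩, ← inl_cxOf c ⟨v, he hv⟩, hxy])⟩
  have hfy : ∀ (c : {c : V → X ⊕ Y // Proper h c}),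
      Proper (restrictH h (Uof c.1)ᶜ) (cyOf c.1) := by
    rintro ⟨c, hc⟩ ⟨e, he⟩
    obtain ⟨u, hu, v, hv, huv⟩ := hc e
    exact ⟨⟨u, he hu⟩, hu, ⟨v, he hv⟩, hv, fun hxy => huv (by
      rw [← inr_cyOf c ⟨u, he hu⟩, ← inr_cyOf c ⟨v, he hv⟩, hxy])⟩
  let f : {c : V → X ⊕ Y // Proper h c} →
      Σ U : Set V, {cx : U → X // Proper (restrictH h U) cx} ×
        {cy : ↥(Uᶜ) → Y // Proper (restrictH h Uᶜ) cy} :=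
    fun c => ⟨Uof c.1, ⟨cxOf c.1, hfx c⟩, ⟨cyOf c.1, hfy c⟩⟩
  -- backward map
  have hg : ∀ (s : Σ U : Set V, {cx : U → X // Proper (restrictH h U) cx} ×
        {cy : ↥(Uᶜ) → Y // Proper (restrictH h Uᶜ) cy}),
      Proper h (cOf s.2.1.1 s.2.2.1) := by
    rintro ⟨U, ⟨cx, hcx⟩, ⟨cy, hcy⟩⟩ e
    dsimp only
    by_cases heU : h e ⊆ U
    · obtain ⟨⟨u, huU⟩, hu, ⟨v, hvU⟩, hv, huv⟩ := hcx ⟨e, heU⟩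
      refine ⟨u, hu, v, hv, ?_⟩
      rw [cOf_mem cx cy huU, cOf_mem cx cy hvU]
      exact fun hc => huv (Sum.inl_injective hc)
    · by_cases heUc : h e ⊆ Uᶜ
      · obtain ⟨⟨u, huU⟩, hu, ⟨v, hvU⟩, hv, huv⟩ := hcy ⟨e, heUc⟩
        refine ⟨u, hu, v, hv, ?_⟩
        rw [cOf_not_mem cx cy huU, cOf_not_mem cx cy hvU]
        exact fun hc => huv (Sum.inr_injective hc)
      · obtain ⟨u, hu, huU⟩ := Set.not_subset.mp heUc
        obtain ⟨v, hv, hvU⟩ := Set.not_subset.mp heU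
        refine ⟨u, hu, v, hv, ?_⟩
        rw [cOf_mem cx cy (by simpa using huU), cOf_not_mem cx cy hvU]
        simp
  let g : (Σ U : Set V, {cx : U → X // Proper (restrictH h U) cx} ×
        {cy : ↥(Uᶜ) → Y // Proper (restrictH h Uᶜ) cy}) →
      {c : V → X ⊕ Y // Proper h c} :=
    fun s => ⟨cOf s.2.1.1 s.2.2.1, hg s⟩
  -- left inverse
  have hgf : ∀ c, g (f c) = c := by
    rintro ⟨c, hc⟩
    apply Subtype.ext
    funext v
    show cOf (cxOf c) (cyOf c) v = c v
    by_cases hv : v ∈ Uof c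
    · rw [cOf_mem _ _ hv]; exact inl_cxOf c ⟨v, hv⟩
    · rw [cOf_not_mem _ _ hv]; exact inr_cyOf c ⟨v, hv⟩
  -- g injective
  have hginj : Function.Injective g := by
    rintro ⟨U1, ⟨cx1, hcx1⟩, ⟨cy1, hcy1⟩⟩ ⟨U2, ⟨cx2, hcx2⟩, ⟨cy2, hcy2⟩⟩ hgs
    have hcc : cOf cx1 cy1 = cOf cx2 cy2 := congrArg Subtype.val hgs
    have hU : U1 = U2 := by
      rw [← Uof_cOf cx1 cy1, ← Uof_cOf cx2 cy2, hcc]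
    subst hU
    have hcx : cx1 = cx2 := by
      funext v
      have := congrFun hcc v
      rw [cOf_mem cx1 cy1 v.2, cOf_mem cx2 cy2 v.2] at this
      simpa using Sum.inl_injective this
    have hcy : cy1 = cy2 := by
      funext v
      have := congrFun hcc v
      rw [cOf_not_mem cx1 cy1 v.2, cOf_not_mem cx2 cy2 v.2] at this
      simpa using Sum.inr_injective this
    subst hcx; subst hcy; rfl
  have hbij : Function.Bijective f := by
    constructor
    · intro a b hab
      rw [← hgf a, ← hgf b, hab]
    · intro s
      exact ⟨g s, hginj (hgf (g s))⟩
  exact ⟨Equiv.ofBijective f hbij⟩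
end

section
/- Let χ_{E,V}(n) denote the number of proper colorings of a finite hypergraph (E,V) with n colors (maps V → Fin n with no edge monochromatic). Then for all natural numbers n, m: χ_{E,V}(n+m) = Σ_{U ⊆ V} χ_{E|U, U}(n) · χ_{E|U^c, U^c}(m), where the sum is over all subsets U of V and U^c = V \ U. -/
/-- Number of proper colorings with `n` colors. -/
noncomputable def chrom {E V : Type*} (h : E → Set V) (n : ℕ) : ℕ :=
  Nat.card {c : V → Fin n // Proper h c}

section Aux
variable {E V : Type*} [Fintype E] [Fintype V] [DecidableEq V]

/-- Pairs of proper colorings on a subset and its complement. -/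
abbrev PairT (h : E → Set V) (n m : ℕ) (U : Finset V) :=
  {c1 : (↑U : Set V) → Fin n // Proper (restrictH h (↑U : Set V)) c1} ×
  {c2 : (((↑U : Set V))ᶜ : Set V) → Fin m // Proper (restrictH h ((↑U : Set V))ᶜ) c2}

omit [Fintype E] [Fintype V] [DecidableEq V] in
lemma pairT_ext (h : E → Set V) (n m : ℕ) {A B : Finset V} (hAB : A = B)
    (p : PairT h n m A) (q : PairT h n m B)
    (h1 : ∀ v (hv : v ∈ (↑A : Set V)) (hv' : v ∈ (↑B : Set V)),
      p.1.1 ⟨v, hv⟩ = q.1.1 ⟨v, hv'⟩)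
    (h2 : ∀ v (hv : v ∈ ((↑A : Set V))ᶜ) (hv' : v ∈ ((↑B : Set V))ᶜ),
      p.2.1 ⟨v, hv⟩ = q.2.1 ⟨v, hv'⟩) :
    (⟨A, p⟩ : Σ U : Finset V, PairT h n m U) = ⟨B, q⟩ := by
  subst hAB
  have : p = q := by
    refine Prod.ext (Subtype.ext (funext fun v => ?_)) (Subtype.ext (funext fun v => ?_))
    · exact h1 v v.2 v.2
    · exact h2 v v.2 v.2
  rw [this]

lemma Nat.card_sigma' {ι : Type*} [Fintype ι] (f : ι → Type*) [∀ i, Finite (f i)] :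
    Nat.card (Σ i, f i) = ∑ i, Nat.card (f i) := by
  have : ∀ i, Fintype (f i) := fun i => Fintype.ofFinite _
  simp [Nat.card_eq_fintype_card, Fintype.card_sigma]

noncomputable def colorEquiv (h : E → Set V) (n m : ℕ) :
    {c : V → Fin (n + m) // Proper h c} ≃ Σ U : Finset V, PairT h n m U where
  toFun c :=
    ⟨Finset.univ.filter (fun v => (c.1 v : ℕ) < n),
      ⟨fun v => ⟨(c.1 v : ℕ), by
          have := v.2
          simp [Finset.mem_filter] at this
          exact this⟩, by
        intro e
        obtain ⟨u, hu, v, hv, huv⟩ := c.2 e.1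
        refine ⟨⟨u, e.2 hu⟩, hu, ⟨v, e.2 hv⟩, hv, ?_⟩
        intro H
        have H' := congrArg Fin.val H
        exact huv (Fin.ext H')⟩,
      ⟨fun v => ⟨(c.1 v : ℕ) - n, by
          have h1 := v.2
          simp [Finset.mem_filter] at h1
          have h2 := (c.1 v).isLt
          omega⟩, by
        intro e
        obtain ⟨u, hu, v, hv, huv⟩ := c.2 e.1
        refine ⟨⟨u, e.2 hu⟩, hu, ⟨v, e.2 hv⟩, hv, ?_⟩
        intro H
        apply huv
        have hu' : ¬ ((c.1 u : ℕ) < n) := by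
          have := e.2 hu; simp [Finset.mem_filter] at this; omega
        have hv' : ¬ ((c.1 v : ℕ) < n) := by
          have := e.2 hv; simp [Finset.mem_filter] at this; omega
        have := congrArg Fin.val H
        simp at this
        exact Fin.ext (by omega)⟩⟩
  invFun x :=
    ⟨fun v =>
      if hv : v ∈ x.1 then
        ⟨(x.2.1.1 ⟨v, by simpa using hv⟩ : ℕ), by
          have := (x.2.1.1 ⟨v, by simpa using hv⟩).isLt; omega⟩
      else
        ⟨n + (x.2.2.1 ⟨v, by simpa using hv⟩ : ℕ), by
          have := (x.2.2.1 ⟨v, by simpa using hv⟩).isLt; omega⟩, by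
      intro e
      by_cases hU : h e ⊆ (↑x.1 : Set V)
      · obtain ⟨u, hu, v, hv, huv⟩ := x.2.1.2 ⟨e, hU⟩
        refine ⟨u, hu, v, hv, ?_⟩
        have hu2 : (u : V) ∈ x.1 := by simpa using u.2
        have hv2 : (v : V) ∈ x.1 := by simpa using v.2
        intro H
        apply huv
        have := congrArg Fin.val H
        simp only [dif_pos hu2, dif_pos hv2] at this
        exact Fin.ext (by simpa using this)
      · by_cases hUc : h e ⊆ ((↑x.1 : Set V))ᶜ
        · obtain ⟨u, hu, v, hv, huv⟩ := x.2.2.2 ⟨e, hUc⟩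
          refine ⟨u, hu, v, hv, ?_⟩
          have hu2 : ¬ ((u : V) ∈ x.1) := fun hc => u.2 hc
          have hv2 : ¬ ((v : V) ∈ x.1) := fun hc => v.2 hc
          intro H
          apply huv
          have := congrArg Fin.val H
          simp only [dif_neg hu2, dif_neg hv2] at this
          exact Fin.ext (by simpa using this)
        · obtain ⟨u, hu, hu2⟩ : ∃ u ∈ h e, ¬ ((u : V) ∈ x.1) := by
            by_contra hc
            push_neg at hc
            exact hU fun v hv => by simpa using hc v hv
          obtain ⟨v, hv, hv2⟩ : ∃ v ∈ h e, (v : V) ∈ x.1 := by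
            by_contra hc
            push_neg at hc
            exact hUc fun v hv => by simpa using hc v hv
          refine ⟨u, hu, v, hv, ?_⟩
          intro H
          have := congrArg Fin.val H
          simp only [dif_neg hu2, dif_pos hv2] at this
          have := (x.2.1.1 ⟨v, by simpa using hv2⟩).isLt
          omega⟩
  left_inv c := by
    apply Subtype.ext
    funext v
    apply Fin.ext
    by_cases hv : (c.1 v : ℕ) < n
    · simp only [Finset.mem_filter, Finset.mem_univ, true_and, hv, dif_pos]
    · simp only [Finset.mem_filter, Finset.mem_univ, true_and, hv, dif_neg,
        not_false_iff]
      have := (c.1 v).isLt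
      omega
  right_inv := by
    rintro ⟨U, p⟩
    refine pairT_ext h n m ?_ _ _ ?_ ?_
    · ext v
      simp only [Finset.mem_filter, Finset.mem_univ, true_and]
      by_cases hv : v ∈ U
      · simp only [dif_pos hv]
        exact ⟨fun _ => hv, fun _ => (p.1.1 ⟨v, by simpa using hv⟩).isLt⟩
      · simp only [dif_neg hv]
        constructor
        · intro hlt; omega
        · intro hvU; exact absurd hvU hv
    · intro v hv hv'
      have hvU : v ∈ U := by simpa using hv'
      apply Fin.ext
      simp only [dif_pos hvU]
    · intro v hv hv'
      have hvU : ¬ (v ∈ U) := by simpa using hv'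
      apply Fin.ext
      simp only [dif_neg hvU]
      omega

end Aux

/-- `χ_{E,V}(n+m) = Σ_{U ⊆ V} χ_{E|U,U}(n) · χ_{E|Uᶜ,Uᶜ}(m)`. -/
theorem chrom_add {E V : Type*} [Fintype E] [Fintype V] [DecidableEq V]
    (h : E → Set V) (n m : ℕ) :
    chrom h (n + m) =
      ∑ U : Finset V,
        chrom (restrictH h (↑U : Set V)) n * chrom (restrictH h ((↑U : Set V))ᶜ) m := by
  rw [chrom, Nat.card_congr (colorEquiv h n m), Nat.card_sigma']
  refine Finset.sum_congr rfl fun U _ => ?_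
  rw [Nat.card_prod]
  rfl
end

section
/- For every finite hypergraph (E,V) with all edges of size ≥ 1, the counting function n ↦ χ_{E,V}(n) (number of maps V → Fin n with no edge monochromatic) agrees with a polynomial in n with integer coefficients; moreover this polynomial has zero constant term whenever V is nonempty. -/
set_option maxRecDepth 8000


section Aux

open Finset Polynomial

variable {E V : Type*} (h : E → Set V)

/-- Relation generated by a set of edges. -/
def hrel (S : Finset E) (u v : V) : Prop := ∃ e ∈ S, u ∈ h e ∧ v ∈ h e

/-- Number of "components" for the edges in `S`. -/
noncomputable def kq (S : Finset E) : ℕ :=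
  Nat.card (Quotient (Relation.EqvGen.setoid (hrel h S)))

/-- `c` is monochromatic on every edge in `S`. -/
def MonoOn (S : Finset E) {n : ℕ} (c : V → Fin n) : Prop :=
  ∀ e ∈ S, ∀ u ∈ h e, ∀ v ∈ h e, c u = c v

lemma card_monoOn [Finite V] (S : Finset E) (n : ℕ) :
    Nat.card {c : V → Fin n // MonoOn h S c} = n ^ kq h S := by
  have eqv : {c : V → Fin n // MonoOn h S c} ≃
      (Quotient (Relation.EqvGen.setoid (hrel h S)) → Fin n) :=
    { toFun := fun c => Quotient.lift c.1 (fun u v huv => by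
        induction huv with
        | rel u v hr => obtain ⟨e, he, hu, hv⟩ := hr; exact c.2 e he u hu v hv
        | refl => rfl
        | symm _ _ _ ih => exact ih.symm
        | trans _ _ _ _ _ ih1 ih2 => exact ih1.trans ih2)
      invFun := fun f => ⟨fun v => f (Quotient.mk _ v), fun e he u hu v hv => by
        have : (Quotient.mk (Relation.EqvGen.setoid (hrel h S)) u) = Quotient.mk _ v :=
          Quotient.sound (Relation.EqvGen.rel _ _ ⟨e, he, hu, hv⟩)
        simp only [this]⟩
      left_inv := fun c => Subtype.ext rfl
      right_inv := fun f => funext fun q => Quotient.inductionOn q fun v => rfl }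
  rw [Nat.card_congr eqv, Nat.card_fun, Nat.card_eq_fintype_card (α := Fin n),
    Fintype.card_fin, kq]

lemma kq_pos [Finite V] [Nonempty V] (S : Finset E) : 0 < kq h S := by
  haveI : Nonempty (Quotient (Relation.EqvGen.setoid (hrel h S))) :=
    ⟨Quotient.mk _ (Classical.arbitrary V)⟩
  exact Nat.card_pos

lemma chrom_eq_sum [Fintype E] [Fintype V] (n : ℕ) :
    (chrom h n : ℤ) =
      ∑ S ∈ (Finset.univ : Finset E).powerset, (-1) ^ S.card * (n : ℤ) ^ kq h S := by
  classical
  have hind : ∀ c : V → Fin n,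
      (if Proper h c then (1 : ℤ) else 0)
        = ∏ e : E, (1 - if (∀ u ∈ h e, ∀ v ∈ h e, c u = c v) then (1 : ℤ) else 0) := by
    intro c
    by_cases hc : Proper h c
    · rw [if_pos hc, Finset.prod_eq_one]
      intro e _
      obtain ⟨u, hu, v, hv, huv⟩ := hc e
      rw [if_neg, sub_zero]
      intro hmono; exact huv (hmono u hu v hv)
    · rw [if_neg hc]
      rw [Proper] at hc
      push_neg at hc
      obtain ⟨e, hmono⟩ := hc
      refine (Finset.prod_eq_zero (Finset.mem_univ e) ?_).symm
      rw [if_pos hmono, sub_self]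
  have h1 : (chrom h n : ℤ) = ∑ c : V → Fin n, if Proper h c then (1 : ℤ) else 0 := by
    rw [Finset.sum_boole, chrom, Nat.card_eq_fintype_card, Fintype.card_subtype]
  rw [h1]
  simp only [hind]
  have h2 : ∀ c : V → Fin n,
      (∏ e : E, ((1 : ℤ) - if (∀ u ∈ h e, ∀ v ∈ h e, c u = c v) then (1 : ℤ) else 0))
        = ∑ S ∈ (Finset.univ : Finset E).powerset,
            (-1) ^ S.card * (if MonoOn h S c then (1 : ℤ) else 0) := by
    intro c
    have := Finset.prod_add
      (fun e : E => -(if (∀ u ∈ h e, ∀ v ∈ h e, c u = c v) then (1 : ℤ) else 0))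
      (fun _ : E => (1 : ℤ)) Finset.univ
    simp only [neg_add_eq_sub, Finset.prod_const_one, mul_one] at this
    rw [this]
    refine Finset.sum_congr rfl fun S _ => ?_
    have hneg : ∀ e ∈ S, (-(if (∀ u ∈ h e, ∀ v ∈ h e, c u = c v) then (1 : ℤ) else 0))
        = (-1) * (if (∀ u ∈ h e, ∀ v ∈ h e, c u = c v) then (1 : ℤ) else 0) := by
      intro e _; ring
    rw [Finset.prod_congr rfl hneg, Finset.prod_mul_distrib, Finset.prod_const,
      Finset.prod_boole]
    congr 1
    simp [MonoOn]
    congr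
  simp only [h2]
  rw [Finset.sum_comm]
  refine Finset.sum_congr rfl fun S _ => ?_
  rw [← Finset.mul_sum, Finset.sum_boole]
  congr 1
  have : (Finset.univ.filter fun c : V → Fin n => MonoOn h S c).card
      = Nat.card {c : V → Fin n // MonoOn h S c} := by
    rw [Nat.card_eq_fintype_card, Fintype.card_subtype]
  rw [this, card_monoOn]
  push_cast
  rfl

end Aux

/-- The chromatic counting function of a finite hypergraph with all edges nonempty
agrees with an integer polynomial, whose constant term is zero if `V` is nonempty. -/
theorem chrom_is_polynomial {E V : Type*} [Fintype E] [Fintype V]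
    (h : E → Set V) (hne : ∀ e, (h e).Nonempty) :
    ∃ p : Polynomial ℤ, (∀ n : ℕ, (chrom h n : ℤ) = p.eval (n : ℤ)) ∧
      (Nonempty V → p.coeff 0 = 0) := by
  classical
  refine ⟨∑ S ∈ (Finset.univ : Finset E).powerset,
      Polynomial.C ((-1 : ℤ) ^ S.card) * Polynomial.X ^ kq h S, ?_, ?_⟩
  · intro n
    rw [chrom_eq_sum h n]
    simp [Polynomial.eval_finset_sum]
  · intro hV
    rw [Polynomial.finset_sum_coeff]
    refine Finset.sum_eq_zero fun S _ => ?_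
    rw [Polynomial.coeff_C_mul, Polynomial.coeff_X_pow, if_neg, mul_zero]
    exact fun h0 => (kq_pos h S).ne' h0.symm
end

section
/- For a finite hypergraph (E,V) with all edges nonempty, and finite color sets X and Y, the proper colorings of (E,V) by X × Y are in bijection with triples consisting of: a subset F ⊆ E, a proper coloring of the hypergraph (F,V) by X, and a proper coloring of the contracted hypergraph (F^c, V/F) by Y. Here V/F is the quotient of V identifying the vertices of each connected component of (F,V), and F^c = E \ F with edges mapped forward under V → V/F. -/
/-- Two vertices are related if they lie on a common edge belonging to `F`. -/
def touchRel {E V : Type*} (h : E → Set V) (F : Set E) (u v : V) : Prop :=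
  ∃ e ∈ F, u ∈ h e ∧ v ∈ h e

/-- The setoid on `V` generated by the edges of `F`; its quotient is `V/F`,
collapsing each connected component of `(F,V)` to a point. -/
def contrSetoid {E V : Type*} (h : E → Set V) (F : Set E) : Setoid V :=
  Relation.EqvGen.setoid (touchRel h F)

/-- The contracted hypergraph `(Fᶜ, V/F)`: edges are those not in `F`, with
vertex sets pushed forward along `V → V/F`. -/
def contractH {E V : Type*} (h : E → Set V) (F : Set E) :
    {e : E // e ∉ F} → Set (Quotient (contrSetoid h F)) :=
  fun e => Quotient.mk (contrSetoid h F) '' h e.1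

/-- The set of edges monochromatic in the `Y`-coordinate. -/
def Fset {E V X Y : Type*} (h : E → Set V) (c : V → X × Y) : Set E :=
  {e | ∀ u ∈ h e, ∀ v ∈ h e, (c u).2 = (c v).2}

lemma snd_const {E V X Y : Type*} (h : E → Set V) (c : V → X × Y) :
    ∀ u v : V, (contrSetoid h (Fset h c)) u v → (c u).2 = (c v).2 := by
  intro u v huv
  change Relation.EqvGen (touchRel h (Fset h c)) u v at huv
  induction huv with
  | rel u v hr => obtain ⟨e, he, hu, hv⟩ := hr; exact he u hu v hv
  | refl => rfl
  | symm _ _ _ ih => exact ih.symm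
  | trans _ _ _ _ _ ih1 ih2 => exact ih1.trans ih2

lemma sigma_helper {E V X Y : Type*} (h : E → Set V) {F F' : Set E}
    (hFF : F = F')
    (cx : {cx : V → X // Proper (fun e : F => h e) cx})
    (cx' : {cx : V → X // Proper (fun e : F' => h e) cx})
    (cy : {cy : Quotient (contrSetoid h F) → Y // Proper (contractH h F) cy})
    (cy' : {cy : Quotient (contrSetoid h F') → Y // Proper (contractH h F') cy})
    (hx : cx.1 = cx'.1)
    (hy : ∀ v : V, cy.1 (Quotient.mk (contrSetoid h F) v)
        = cy'.1 (Quotient.mk (contrSetoid h F') v)) :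
    (⟨F, cx, cy⟩ : Σ G : Set E,
        {cx : V → X // Proper (fun e : G => h e) cx} ×
        {cy : Quotient (contrSetoid h G) → Y // Proper (contractH h G) cy})
      = ⟨F', cx', cy'⟩ := by
  subst hFF
  have h1 : cx = cx' := Subtype.ext hx
  have h2 : cy = cy' := by
    apply Subtype.ext
    funext q
    induction q using Quotient.ind with
    | _ v => exact hy v
  rw [h1, h2]

/-- Proper colorings of `(E,V)` by `X × Y` are in bijection with triples:
a subset `F ⊆ E`, a proper coloring of `(F,V)` by `X`, and a proper
coloring of the contraction `(Fᶜ, V/F)` by `Y`. -/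
theorem colorings_prod_equiv {E V X Y : Type*} [Fintype E] [Fintype V]
    [Fintype X] [Fintype Y] (h : E → Set V) (hne : ∀ e, (h e).Nonempty) :
    Nonempty ({c : V → X × Y // Proper h c} ≃
      Σ F : Set E,
        {cx : V → X // Proper (fun e : F => h e) cx} ×
        {cy : Quotient (contrSetoid h F) → Y // Proper (contractH h F) cy}) := by
  classical
  refine ⟨{
    toFun := fun c =>
      ⟨Fset h c.1,
        ⟨fun v => (c.1 v).1, ?_⟩,
        ⟨Quotient.lift (fun v => (c.1 v).2) (snd_const h c.1), ?_⟩⟩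
    invFun := fun t =>
      ⟨fun v => (t.2.1.1 v, t.2.2.1 (Quotient.mk (contrSetoid h t.1) v)), ?_⟩
    left_inv := ?_
    right_inv := ?_ }⟩
  · -- cx proper on F = Fset
    rintro ⟨e, he⟩
    obtain ⟨u, hu, v, hv, hne'⟩ := c.2 e
    refine ⟨u, hu, v, hv, fun hfst => hne' ?_⟩
    exact Prod.ext hfst (he u hu v hv)
  · -- cy proper on contraction
    rintro ⟨e, he⟩
    have : ¬ ∀ u ∈ h e, ∀ v ∈ h e, (c.1 u).2 = (c.1 v).2 := he
    push_neg at this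
    obtain ⟨u, hu, v, hv, hne'⟩ := this
    exact ⟨Quotient.mk _ u, ⟨u, hu, rfl⟩, Quotient.mk _ v, ⟨v, hv, rfl⟩, hne'⟩
  · -- invFun output is proper
    intro e
    by_cases heF : e ∈ t.1
    · obtain ⟨u, hu, v, hv, hne'⟩ := t.2.1.2 ⟨e, heF⟩
      exact ⟨u, hu, v, hv, fun hc => hne' (congrArg Prod.fst hc)⟩
    · obtain ⟨qu, hqu, qv, hqv, hne'⟩ := t.2.2.2 ⟨e, heF⟩
      obtain ⟨u, hu, rfl⟩ := hqu
      obtain ⟨v, hv, rfl⟩ := hqv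
      exact ⟨u, hu, v, hv, fun hc => hne' (congrArg Prod.snd hc)⟩
  · -- left inverse
    intro c
    apply Subtype.ext
    funext v
    rfl
  · -- right inverse
    rintro ⟨F, cx, cy⟩
    set c : V → X × Y := fun v => (cx.1 v, cy.1 (Quotient.mk (contrSetoid h F) v))
      with hc
    have hF : Fset h c = F := by
      ext e
      constructor
      · intro he
        by_contra heF
        obtain ⟨qu, hqu, qv, hqv, hne'⟩ := cy.2 ⟨e, heF⟩
        obtain ⟨u, hu, rfl⟩ := hqu
        obtain ⟨v, hv, rfl⟩ := hqv
        exact hne' (he u hu v hv)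
      · intro heF u hu v hv
        have : (contrSetoid h F) u v :=
          Relation.EqvGen.rel _ _ ⟨e, heF, hu, hv⟩
        exact congrArg cy.1 (Quotient.sound this)
    exact sigma_helper h hF _ cx _ cy rfl (fun v => rfl)
end

section
/- Let χ_{E,V}(n) count proper colorings of a finite hypergraph (E,V) with n colors. Then for all n, m: χ_{E,V}(n·m) = Σ_{F ⊆ E} χ_{F,V}(n) · χ_{F^c, V/F}(m), where (F,V) is the sub-hypergraph on edge set F and (F^c, V/F) is the contraction described below. -/
/-- A function constant on each edge of `F` is constant on `EqvGen (touchRel h F)` classes. -/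
lemma const_of_eqvGen {E V β : Type*} (h : E → Set V) (F : Set E) (b : V → β)
    (hb : ∀ e ∈ F, ∀ u ∈ h e, ∀ v ∈ h e, b u = b v) :
    ∀ u v, Relation.EqvGen (touchRel h F) u v → b u = b v := by
  intro u v huv
  induction huv with
  | rel u v hr => obtain ⟨e, he, hu, hv⟩ := hr; exact hb e he u hu v hv
  | refl => rfl
  | symm _ _ _ ih => exact ih.symm
  | trans _ _ _ _ _ ih1 ih2 => exact ih1.trans ih2

/-- `χ_{E,V}(n·m) = Σ_{F ⊆ E} χ_{F,V}(n) · χ_{Fᶜ,V/F}(m)`. -/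
theorem chrom_mul {E V : Type*} [Fintype E] [Fintype V] [DecidableEq E]
    (h : E → Set V) (hne : ∀ e, (h e).Nonempty) (n m : ℕ) :
    chrom h (n * m) =
      ∑ F : Finset E,
        chrom (fun e : (↑F : Set E) => h e) n * chrom (contractH h (↑F : Set E)) m := by
  classical
  -- Step 1: recolor with pairs
  have step1 : chrom h (n * m) = Nat.card {c : V → Fin n × Fin m // Proper h c} := by
    unfold chrom
    apply Nat.card_congr
    refine Equiv.subtypeEquiv
      (Equiv.arrowCongr (Equiv.refl V) (finProdFinEquiv (m := n) (n := m)).symm) ?_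
    intro c
    simp only [Proper, Equiv.arrowCongr_apply, Function.comp, Equiv.refl_symm,
      Equiv.refl_apply, ne_eq, EmbeddingLike.apply_eq_iff_eq]
  rw [step1]
  -- The sigma type
  set T := (F : Finset E) ×
      ({a : V → Fin n // Proper (fun e : (↑F : Set E) => h e) a} ×
       {b : Quotient (contrSetoid h (↑F : Set E)) → Fin m //
         Proper (contractH h (↑F : Set E)) b}) with hT
  -- backward map
  have gdef : ∀ (F : Finset E) (a : V → Fin n)
      (b : Quotient (contrSetoid h (↑F : Set E)) → Fin m), True := fun _ _ _ => trivial
  let g : T → {c : V → Fin n × Fin m // Proper h c} := fun x =>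
    ⟨fun v => (x.2.1.1 v, x.2.2.1 (Quotient.mk (contrSetoid h (↑x.1 : Set E)) v)), by
      intro e
      by_cases he : e ∈ x.1
      · obtain ⟨u, hu, v, hv, hne'⟩ := x.2.1.2 ⟨e, he⟩
        exact ⟨u, hu, v, hv, fun hq => hne' (congrArg Prod.fst hq)⟩
      · obtain ⟨p, ⟨u, hu, hpu⟩, q, ⟨v, hv, hqv⟩, hne'⟩ := x.2.2.2 ⟨e, he⟩
        refine ⟨u, hu, v, hv, fun hq => hne' ?_⟩
        rw [← hpu, ← hqv]
        exact congrArg Prod.snd hq⟩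
  -- characterization of F from g x
  have memF : ∀ (x : T) (e : E),
      e ∈ x.1 ↔ ∀ u ∈ h e, ∀ v ∈ h e, ((g x).1 u).2 = ((g x).1 v).2 := by
    intro x e
    constructor
    · intro he u hu v hv
      have : Quotient.mk (contrSetoid h (↑x.1 : Set E)) u =
          Quotient.mk (contrSetoid h (↑x.1 : Set E)) v :=
        Quotient.sound (Relation.EqvGen.rel _ _ ⟨e, he, hu, hv⟩)
      simp only [g]
      rw [this]
    · intro hconst
      by_contra he
      obtain ⟨p, ⟨u, hu, hpu⟩, q, ⟨v, hv, hqv⟩, hne'⟩ := x.2.2.2 ⟨e, he⟩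
      apply hne'
      rw [← hpu, ← hqv]
      exact hconst u hu v hv
  have hbij : Function.Bijective g := by
    constructor
    · rintro ⟨F1, a1, b1⟩ ⟨F2, a2, b2⟩ hgeq
      have hc : ∀ v, (g ⟨F1, a1, b1⟩).1 v = (g ⟨F2, a2, b2⟩).1 v := by
        intro v; rw [hgeq]
      have hF : F1 = F2 := by
        ext e
        rw [memF ⟨F1, a1, b1⟩ e, memF ⟨F2, a2, b2⟩ e]
        constructor
        · intro hk u hu v hv; rw [← hc u, ← hc v]; exact hk u hu v hv
        · intro hk u hu v hv; rw [hc u, hc v]; exact hk u hu v hv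
      subst hF
      have ha : a1 = a2 := by
        apply Subtype.ext
        funext v
        exact congrArg Prod.fst (hc v)
      have hb : b1 = b2 := by
        apply Subtype.ext
        funext q
        induction q using Quotient.ind with
        | _ v => exact congrArg Prod.snd (hc v)
      rw [ha, hb]
    · rintro ⟨c, hc⟩
      set F : Finset E :=
        Finset.univ.filter (fun e => ∀ u ∈ h e, ∀ v ∈ h e, (c u).2 = (c v).2) with hFdef
      have hmemF : ∀ e, e ∈ F ↔ ∀ u ∈ h e, ∀ v ∈ h e, (c u).2 = (c v).2 := by
        intro e; simp [hFdef]
      -- first coordinate proper on F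
      have ha : Proper (fun e : (↑F : Set E) => h e) (fun v => (c v).1) := by
        rintro ⟨e, he⟩
        obtain ⟨u, hu, v, hv, hne'⟩ := hc e
        refine ⟨u, hu, v, hv, fun hq => hne' ?_⟩
        have h2 : (c u).2 = (c v).2 := (hmemF e).1 he u hu v hv
        exact Prod.ext hq h2
      -- second coordinate descends
      have hresp : ∀ u v, Relation.EqvGen (touchRel h (↑F : Set E)) u v →
          (c u).2 = (c v).2 := by
        apply const_of_eqvGen
        intro e he u hu v hv
        exact (hmemF e).1 he u hu v hv
      let b : Quotient (contrSetoid h (↑F : Set E)) → Fin m :=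
        Quotient.lift (fun v => (c v).2) hresp
      have hbmk : ∀ v, b (Quotient.mk (contrSetoid h (↑F : Set E)) v) = (c v).2 :=
        fun _ => rfl
      have hb : Proper (contractH h (↑F : Set E)) b := by
        rintro ⟨e, he⟩
        have : ¬ ∀ u ∈ h e, ∀ v ∈ h e, (c u).2 = (c v).2 := fun hk => he ((hmemF e).2 hk)
        push_neg at this
        obtain ⟨u, hu, v, hv, hne'⟩ := this
        exact ⟨Quotient.mk _ u, ⟨u, hu, rfl⟩, Quotient.mk _ v, ⟨v, hv, rfl⟩, hne'⟩
      refine ⟨⟨F, ⟨fun v => (c v).1, ha⟩, ⟨b, hb⟩⟩, ?_⟩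
      apply Subtype.ext
      funext v
      exact Prod.ext rfl (hbmk v)
  rw [← Nat.card_eq_of_bijective g hbij]
  -- Step 3: count the sigma type
  have : ∀ (F : Finset E),
      Nat.card ({a : V → Fin n // Proper (fun e : (↑F : Set E) => h e) a} ×
       {b : Quotient (contrSetoid h (↑F : Set E)) → Fin m //
         Proper (contractH h (↑F : Set E)) b}) =
      chrom (fun e : (↑F : Set E) => h e) n * chrom (contractH h (↑F : Set E)) m := by
    intro F
    rw [Nat.card_prod]
    rfl
  rw [← Finset.sum_congr rfl (fun F _ => this F)]
  -- Nat.card of sigma = sum of Nat.cards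
  have fin1 : ∀ F : Finset E,
      Fintype ({a : V → Fin n // Proper (fun e : (↑F : Set E) => h e) a} ×
       {b : Quotient (contrSetoid h (↑F : Set E)) → Fin m //
         Proper (contractH h (↑F : Set E)) b}) := by
    intro F
    have : Finite (Quotient (contrSetoid h (↑F : Set E))) := Quotient.finite _
    exact Fintype.ofFinite _
  letI := fin1
  letI : Fintype T := Sigma.instFintype
  rw [Nat.card_eq_fintype_card, Fintype.card_sigma]
  exact Finset.sum_congr rfl fun F _ => (Nat.card_eq_fintype_card).symm
end

section
/- The extraction-contraction coproduct δ is coassociative on hypergraphs with no empty edges: for disjoint edge subsets A, B ⊆ E, contracting by A ∪ B is the same as first contracting by A and then contracting by (the image of) B, i.e., the quotient V → V/(A∪B) factors as V → V/A → (V/A)/B and these quotients of V are equal. -/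
/-- The setoid on `V/A` generated by the images of the edges of `B`:
contracting `V/A` by the induced edges of `B`. -/
def secondSetoid {E V : Type*} (h : E → Set V) (A B : Set E) :
    Setoid (Quotient (contrSetoid h A)) :=
  Relation.EqvGen.setoid (fun x y => ∃ e ∈ B,
    x ∈ Quotient.mk (contrSetoid h A) '' h e ∧
    y ∈ Quotient.mk (contrSetoid h A) '' h e)

section Aux

variable {E V : Type*} (h : E → Set V) (A B : Set E)

/-- The composite quotient map `V → (V/A)/B`. -/
private def compMap (v : V) : Quotient (secondSetoid h A B) :=
  Quotient.mk (secondSetoid h A B) (Quotient.mk (contrSetoid h A) v)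

private lemma eqvA_of_mkA_eq {u v : V}
    (huv : Quotient.mk (contrSetoid h A) u = Quotient.mk (contrSetoid h A) v) :
    Relation.EqvGen (touchRel h A) u v :=
  Quotient.exact huv

private lemma eqvAB_of_eqvA {u v : V}
    (huv : Relation.EqvGen (touchRel h A) u v) :
    Relation.EqvGen (touchRel h (A ∪ B)) u v := by
  refine Relation.EqvGen.mono (fun a b hab => ?_) u v huv
  obtain ⟨e, he, h1, h2⟩ := hab
  exact ⟨e, Or.inl he, h1, h2⟩

private lemma forward {u v : V}
    (huv : Relation.EqvGen (touchRel h (A ∪ B)) u v) :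
    compMap h A B u = compMap h A B v := by
  induction huv with
  | rel a b hab =>
      obtain ⟨e, he, h1, h2⟩ := hab
      rcases he with he | he
      · have : Quotient.mk (contrSetoid h A) a = Quotient.mk (contrSetoid h A) b :=
          Quotient.sound (Relation.EqvGen.rel _ _ ⟨e, he, h1, h2⟩)
        unfold compMap; rw [this]
      · exact Quotient.sound (Relation.EqvGen.rel _ _
          ⟨e, he, ⟨a, h1, rfl⟩, ⟨b, h2, rfl⟩⟩)
  | refl a => rfl
  | symm a b _ ih => exact ih.symm
  | trans a b c _ _ ih1 ih2 => exact ih1.trans ih2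

private lemma backward_aux {x y : Quotient (contrSetoid h A)}
    (hxy : Relation.EqvGen (fun x y => ∃ e ∈ B,
      x ∈ Quotient.mk (contrSetoid h A) '' h e ∧
      y ∈ Quotient.mk (contrSetoid h A) '' h e) x y) :
    ∀ u v : V, Quotient.mk (contrSetoid h A) u = x →
      Quotient.mk (contrSetoid h A) v = y →
      Relation.EqvGen (touchRel h (A ∪ B)) u v := by
  induction hxy with
  | rel x y hxy =>
      intro u v hu hv
      obtain ⟨e, he, ⟨a, ha, hax⟩, ⟨b, hb, hby⟩⟩ := hxy
      have h1 : Relation.EqvGen (touchRel h (A ∪ B)) u a :=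
        eqvAB_of_eqvA h A B (eqvA_of_mkA_eq h A (hu.trans hax.symm))
      have h2 : Relation.EqvGen (touchRel h (A ∪ B)) a b :=
        Relation.EqvGen.rel _ _ ⟨e, Or.inr he, ha, hb⟩
      have h3 : Relation.EqvGen (touchRel h (A ∪ B)) b v :=
        eqvAB_of_eqvA h A B (eqvA_of_mkA_eq h A (hby.trans hv.symm))
      exact (h1.trans _ _ _ h2).trans _ _ _ h3
  | refl x =>
      intro u v hu hv
      exact eqvAB_of_eqvA h A B (eqvA_of_mkA_eq h A (hu.trans hv.symm))
  | symm x y _ ih =>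
      intro u v hu hv
      exact Relation.EqvGen.symm _ _ (ih v u hv hu)
  | trans x y z _ _ ih1 ih2 =>
      intro u v hu hv
      obtain ⟨w, hw⟩ := Quotient.exists_rep y
      exact (ih1 u w hu hw).trans _ _ _ (ih2 w v hw hv)

private lemma backward {u v : V}
    (huv : compMap h A B u = compMap h A B v) :
    Relation.EqvGen (touchRel h (A ∪ B)) u v :=
  backward_aux h A B (Quotient.exact huv) u v rfl rfl

end Aux

/-- Coassociativity of extraction–contraction: for disjoint edge subsets
`A, B ⊆ E` of a hypergraph with nonempty edges, contracting by `A ∪ B` is the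
same as contracting first by `A` and then by (the image of) `B`: there is a
bijection `V/(A ∪ B) ≃ (V/A)/B` compatible with the quotient maps. -/
theorem contraction_coassoc {E V : Type*} (h : E → Set V) (A B : Set E)
    (hAB : Disjoint A B) (hne : ∀ e, (h e).Nonempty) :
    ∃ φ : Quotient (contrSetoid h (A ∪ B)) ≃ Quotient (secondSetoid h A B),
      ∀ v : V, φ (Quotient.mk (contrSetoid h (A ∪ B)) v) =
        Quotient.mk (secondSetoid h A B) (Quotient.mk (contrSetoid h A) v) := by
  let g : Quotient (contrSetoid h (A ∪ B)) → Quotient (secondSetoid h A B) :=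
    Quotient.lift (compMap h A B) (fun u v huv => forward h A B huv)
  have hinj : Function.Injective g := by
    intro x y hxy
    obtain ⟨u, rfl⟩ := Quotient.exists_rep x
    obtain ⟨v, rfl⟩ := Quotient.exists_rep y
    exact Quotient.sound (backward h A B hxy)
  have hsurj : Function.Surjective g := by
    intro z
    obtain ⟨y, rfl⟩ := Quotient.exists_rep z
    obtain ⟨v, rfl⟩ := Quotient.exists_rep y
    exact ⟨Quotient.mk _ v, rfl⟩
  exact ⟨Equiv.ofBijective g ⟨hinj, hsurj⟩, fun v => rfl⟩
end

section
/- If p(x) ∈ ℚ[x] satisfies p(x·y) = x^n · p(y) + p(x) · y as an identity in ℚ[x,y] for some fixed n ≥ 2, then p(x) = a·(x^n − x) for some constant a ∈ ℚ. -/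
open MvPolynomial

/-- If `p ∈ ℚ[x]` satisfies `p(x·y) = x^n · p(y) + p(x) · y` as an identity in
`ℚ[x,y]`, with `n ≥ 2`, then `p(x) = a·(x^n − x)` for some `a ∈ ℚ`. -/
theorem functional_eq_mul (n : ℕ) (hn : 2 ≤ n) (p : Polynomial ℚ)
    (hp : Polynomial.aeval ((X 0 : MvPolynomial (Fin 2) ℚ) * X 1) p =
      (X 0 : MvPolynomial (Fin 2) ℚ) ^ n * Polynomial.aeval (X 1 : MvPolynomial (Fin 2) ℚ) p
        + Polynomial.aeval (X 0 : MvPolynomial (Fin 2) ℚ) p * X 1) :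
    ∃ a : ℚ, p = Polynomial.C a * (Polynomial.X ^ n - Polynomial.X) := by
  have key : ∀ s t : ℚ, p.eval (s * t) = s ^ n * p.eval t + p.eval s * t := by
    intro s t
    have h := congrArg (MvPolynomial.aeval (![s, t] : Fin 2 → ℚ)) hp
    simp only [map_add, map_mul, map_pow, ← Polynomial.aeval_algHom_apply, aeval_X] at h
    simpa using h
  have h2 : (2 : ℚ) ^ n - 2 ≠ 0 := by
    have : (4 : ℚ) ≤ 2 ^ n := by
      calc (4 : ℚ) = 2 ^ 2 := by norm_num
      _ ≤ 2 ^ n := by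
        apply pow_le_pow_right₀ (by norm_num) hn
    linarith
  refine ⟨p.eval 2 / (2 ^ n - 2), ?_⟩
  apply Polynomial.funext
  intro s
  have h1 := key s 2
  have h2' := key 2 s
  rw [mul_comm] at h2'
  have hsym : p.eval s * ((2:ℚ) ^ n - 2) = p.eval 2 * (s ^ n - s) := by
    linear_combination h1 - h2'
  have : p.eval s = p.eval 2 / (2 ^ n - 2) * (s ^ n - s) := by
    field_simp
    linear_combination hsym
  simpa [Polynomial.eval_mul, Polynomial.eval_pow] using this
end
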